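/- Let A, B be real symmetric n×n matrices and let N = ⋂_{i,j=1}^{n-1} ker([Aⁱ, Bʲ]). Then N is invariant under both A and B, and the restrictions of A and B to N commute. -/

import Mathlib

open Matrix Polynomial

private lemma shemesh_dot_symm {n : ℕ} (M : Matrix (Fin n) (Fin n) ℝ) (v u : Fin n → ℝ) :
    (M *ᵥ v) ⬝ᵥ u = v ⬝ᵥ (Mᵀ *ᵥ u) := by
  rw [dotProduct_mulVec, vecMul_transpose]

private lemma shemesh_pow_zero {n : ℕ} (hn : 0 < n) (A : Matrix (Fin n) (Fin n) ℝ)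
    (f : Matrix (Fin n) (Fin n) ℝ →ₗ[ℝ] (Fin n → ℝ))
    (h : ∀ k < n, f (A ^ k) = 0) : ∀ m, f (A ^ m) = 0 := by
  intro m
  rw [Matrix.pow_eq_aeval_mod_charpoly]
  have hch : A.charpoly ≠ 1 := by
    intro h1
    have := A.charpoly_natDegree_eq_dim
    rw [h1] at this
    simp [Fintype.card_fin] at this
    omega
  have hdeg : (X ^ m %ₘ A.charpoly).natDegree < n := by
    have := Polynomial.natDegree_modByMonic_lt (X ^ m) A.charpoly_monic hch
    rwa [A.charpoly_natDegree_eq_dim, Fintype.card_fin] at this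
  rw [Polynomial.aeval_eq_sum_range, map_sum]
  apply Finset.sum_eq_zero
  intro i hi
  rw [Finset.mem_range] at hi
  rw [LinearMap.map_smul, h i (by omega)]
  simp

/-- The linear map `M ↦ (M * X - X * M) *ᵥ v`. -/
private def shemesh_f {n : ℕ} (X : Matrix (Fin n) (Fin n) ℝ) (v : Fin n → ℝ) :
    Matrix (Fin n) (Fin n) ℝ →ₗ[ℝ] (Fin n → ℝ) where
  toFun M := (M * X - X * M) *ᵥ v
  map_add' M N := by
    simp [add_mul, mul_add, sub_mulVec, add_mulVec]
    abel
  map_smul' c M := by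
    simp [Matrix.smul_mul, Matrix.mul_smul, sub_mulVec, smul_mulVec, smul_sub]

theorem shemesh_subspace_invariant_and_commuting {n : ℕ}
    (A B : Matrix (Fin n) (Fin n) ℝ) (hA : A.IsSymm) (hB : B.IsSymm)
    (N : Submodule ℝ (Fin n → ℝ))
    (hN : N = ⨅ i ∈ Finset.Icc 1 (n - 1), ⨅ j ∈ Finset.Icc 1 (n - 1),
      LinearMap.ker (Matrix.toLin' (A ^ i * B ^ j - B ^ j * A ^ i))) :
    (∀ v ∈ N, A *ᵥ v ∈ N) ∧ (∀ v ∈ N, B *ᵥ v ∈ N) ∧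
    (∀ v ∈ N, A *ᵥ (B *ᵥ v) = B *ᵥ (A *ᵥ v)) := by
  rcases Nat.eq_zero_or_pos n with hn | hn
  · subst hn
    have hz : ∀ w : Fin 0 → ℝ, w = 0 := fun w => funext fun i => i.elim0
    refine ⟨fun v _ => ?_, fun v _ => ?_, fun v _ => ?_⟩
    · rw [hz (A *ᵥ v)]; exact N.zero_mem
    · rw [hz (B *ᵥ v)]; exact N.zero_mem
    · rw [hz (A *ᵥ (B *ᵥ v)), hz (B *ᵥ (A *ᵥ v))]
  -- membership criterion
  have hmem : ∀ v : Fin n → ℝ, v ∈ N ↔ ∀ k ∈ Finset.Icc 1 (n-1), ∀ l ∈ Finset.Icc 1 (n-1),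
      (A ^ k * B ^ l - B ^ l * A ^ k) *ᵥ v = 0 := by
    intro v
    subst hN
    simp only [Submodule.mem_iInf, LinearMap.mem_ker, Matrix.toLin'_apply, Matrix.sub_mulVec, Finset.mem_Icc]
  -- key: membership implies the commutator identity for ALL exponents
  have key : ∀ v ∈ N, ∀ k l : ℕ, (A ^ k * B ^ l - B ^ l * A ^ k) *ᵥ v = 0 := by
    intro v hv
    rw [hmem] at hv
    have step1 : ∀ k < n, ∀ l < n, (A ^ k * B ^ l - B ^ l * A ^ k) *ᵥ v = 0 := by
      intro k hk l hl
      rcases Nat.eq_zero_or_pos k with hk0 | hk0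
      · subst hk0; simp
      rcases Nat.eq_zero_or_pos l with hl0 | hl0
      · subst hl0; simp
      exact hv k (Finset.mem_Icc.mpr ⟨hk0, by omega⟩) l (Finset.mem_Icc.mpr ⟨hl0, by omega⟩)
    have step2 : ∀ k < n, ∀ l : ℕ, (A ^ k * B ^ l - B ^ l * A ^ k) *ᵥ v = 0 := by
      intro k hk l
      have h2 : shemesh_f (A ^ k) v (B ^ l) = 0 :=
        shemesh_pow_zero hn B (shemesh_f (A ^ k) v)
          (fun l' hl' => by
            show (B ^ l' * A ^ k - A ^ k * B ^ l') *ᵥ v = 0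
            rw [← neg_sub (A ^ k * B ^ l') (B ^ l' * A ^ k), neg_mulVec,
              step1 k hk l' hl', neg_zero]) l
      have h3 : (B ^ l * A ^ k - A ^ k * B ^ l) *ᵥ v = 0 := h2
      rw [← neg_sub (B ^ l * A ^ k) (A ^ k * B ^ l), neg_mulVec, h3, neg_zero]
    intro k l
    exact shemesh_pow_zero hn A (shemesh_f (B ^ l) v)
      (fun k' hk' => step2 k' hk' l) k
  -- skew-symmetry of commutators
  have hskew : ∀ k l : ℕ, (A ^ k * B ^ l - B ^ l * A ^ k)ᵀ = -(A ^ k * B ^ l - B ^ l * A ^ k) := by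
    intro k l
    rw [transpose_sub, transpose_mul, transpose_mul, transpose_pow, transpose_pow, hA, hB]
    exact (neg_sub _ _).symm
  -- v ⬝ᵥ (C *ᵥ u) = 0 for v ∈ N (all exponents)
  have hdot : ∀ v ∈ N, ∀ k l : ℕ, ∀ u : Fin n → ℝ,
      v ⬝ᵥ ((A ^ k * B ^ l - B ^ l * A ^ k) *ᵥ u) = 0 := by
    intro v hv k l u
    have := shemesh_dot_symm (A ^ k * B ^ l - B ^ l * A ^ k)ᵀ v u
    rw [transpose_transpose] at this
    rw [← this, hskew, neg_mulVec, key v hv k l]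
    simp
  -- invariance under A
  have invA : ∀ v ∈ N, A *ᵥ v ∈ N := by
    intro v hv
    rw [hmem]
    intro k _ l _
    rw [mulVec_mulVec]
    suffices h : ∀ u, (((A ^ k * B ^ l - B ^ l * A ^ k) * A) *ᵥ v) ⬝ᵥ u = 0 by
      exact dotProduct_self_eq_zero.mp (h _)
    intro u
    rw [shemesh_dot_symm]
    have hT : ((A ^ k * B ^ l - B ^ l * A ^ k) * A)ᵀ =
        (A ^ 1 * B ^ l - B ^ l * A ^ 1) * A ^ k
          - (A ^ (k+1) * B ^ l - B ^ l * A ^ (k+1)) := by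
      have hAC : A * (A ^ k * B ^ l - B ^ l * A ^ k) =
          (A ^ (k+1) * B ^ l - B ^ l * A ^ (k+1))
            - (A ^ 1 * B ^ l - B ^ l * A ^ 1) * A ^ k := by
        simp only [pow_succ', pow_one, pow_zero, one_mul, mul_one, mul_sub, sub_mul, mul_assoc]
        abel
      rw [transpose_mul, hA, hskew k l, mul_neg, hAC, neg_sub]
    rw [hT, sub_mulVec, dotProduct_sub, ← mulVec_mulVec, hdot v hv 1 l,
      hdot v hv (k+1) l, sub_zero]
  -- invariance under B
  have invB : ∀ v ∈ N, B *ᵥ v ∈ N := by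
    intro v hv
    rw [hmem]
    intro k _ l _
    rw [mulVec_mulVec]
    suffices h : ∀ u, (((A ^ k * B ^ l - B ^ l * A ^ k) * B) *ᵥ v) ⬝ᵥ u = 0 by
      exact dotProduct_self_eq_zero.mp (h _)
    intro u
    rw [shemesh_dot_symm]
    have hT : ((A ^ k * B ^ l - B ^ l * A ^ k) * B)ᵀ =
        (A ^ k * B ^ 1 - B ^ 1 * A ^ k) * B ^ l
          - (A ^ k * B ^ (l+1) - B ^ (l+1) * A ^ k) := by
      have hBC : B * (A ^ k * B ^ l - B ^ l * A ^ k) =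
          (A ^ k * B ^ (l+1) - B ^ (l+1) * A ^ k)
            - (A ^ k * B ^ 1 - B ^ 1 * A ^ k) * B ^ l := by
        simp only [pow_succ', pow_one, pow_zero, one_mul, mul_one, mul_sub, sub_mul, mul_assoc]
        abel
      rw [transpose_mul, hB, hskew k l, mul_neg, hBC, neg_sub]
    rw [hT, sub_mulVec, dotProduct_sub, ← mulVec_mulVec, hdot v hv k 1,
      hdot v hv k (l+1), sub_zero]
  refine ⟨invA, invB, fun v hv => ?_⟩
  have h11 := key v hv 1 1
  simp only [pow_one] at h11
  rw [sub_mulVec, sub_eq_zero] at h11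
  rw [mulVec_mulVec, mulVec_mulVec, h11]
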